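/- Assume α₁, α₂, α₃ > 0. Then for every differentiable x : [0,∞) → ℝ³ with x'(t) = b(x(t)) for all t ≥ 0 and x(0) ≠ 0, one has ‖x(t)‖² → 1 as t → ∞. That is, the invariant unit sphere S² is a global attractor of the system in ℝ³ ∖ {0}. -/

import Mathlib

open scoped RealInnerProductSpace

/-- The cubic Kolmogorov vector field on `ℝ³` (modelled as `EuclideanSpace ℝ (Fin 3)`):
`b(x)₁ = x₁(α₁ − α₁x₁² − (α₁+α₂+d₁)x₂² + d₂x₃²)`,
`b(x)₂ = x₂(α₂ + d₁x₁² − α₂x₂² − (α₂+α₃+d₃)x₃²)`,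
`b(x)₃ = x₃(α₃ − (α₃+α₁+d₂)x₁² + d₃x₂² − α₃x₃²)`. -/
noncomputable def bVF (α₁ α₂ α₃ d₁ d₂ d₃ : ℝ) (x : EuclideanSpace ℝ (Fin 3)) :
    EuclideanSpace ℝ (Fin 3) :=
  (WithLp.equiv 2 (Fin 3 → ℝ)).symm
    ![x 0 * (α₁ - α₁ * (x 0)^2 - (α₁ + α₂ + d₁) * (x 1)^2 + d₂ * (x 2)^2),
      x 1 * (α₂ + d₁ * (x 0)^2 - α₂ * (x 1)^2 - (α₂ + α₃ + d₃) * (x 2)^2),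
      x 2 * (α₃ - (α₃ + α₁ + d₂) * (x 0)^2 + d₃ * (x 1)^2 - α₃ * (x 2)^2)]

/-- If `αᵢ > 0`, the invariant unit sphere is a global attractor in `ℝ³ \\ {0}`:
`‖x(t)‖² → 1` for every solution with `x(0) ≠ 0`. -/
theorem sphere_global_attractor (α₁ α₂ α₃ d₁ d₂ d₃ : ℝ)
    (hα₁ : 0 < α₁) (hα₂ : 0 < α₂) (hα₃ : 0 < α₃)
    (x : ℝ → EuclideanSpace ℝ (Fin 3))
    (hx : ∀ t : ℝ, 0 ≤ t → HasDerivAt x (bVF α₁ α₂ α₃ d₁ d₂ d₃ (x t)) t)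
    (h0 : x 0 ≠ 0) :
    Filter.Tendsto (fun t => ‖x t‖ ^ 2) Filter.atTop (nhds 1) := by
  set V : ℝ → ℝ := fun t => (x t 0)^2 + (x t 1)^2 + (x t 2)^2 with hVdef
  set W : ℝ → ℝ := fun t => α₁ * (x t 0)^2 + α₂ * (x t 1)^2 + α₃ * (x t 2)^2 with hWdef
  have hnorm : ∀ t, ‖x t‖ ^ 2 = V t := by
    intro t
    rw [EuclideanSpace.norm_eq, Real.sq_sqrt (by positivity)]
    simp [Fin.sum_univ_three, sq_abs, hVdef]
  -- component derivatives
  have hxi : ∀ (i : Fin 3) (t : ℝ), 0 ≤ t →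
      HasDerivAt (fun s => x s i) (bVF α₁ α₂ α₃ d₁ d₂ d₃ (x t) i) t := fun i t ht => by
    exact (EuclideanSpace.proj (𝕜 := ℝ) i).hasFDerivAt.comp_hasDerivAt t (hx t ht)
  have hV' : ∀ t : ℝ, 0 ≤ t → HasDerivAt V (2 * W t * (1 - V t)) t := by
    intro t ht
    have h0' := (hxi 0 t ht).pow 2
    have h1' := (hxi 1 t ht).pow 2
    have h2' := (hxi 2 t ht).pow 2
    have := (h0'.add h1').add h2'
    refine this.congr_deriv ?_
    have e0 : bVF α₁ α₂ α₃ d₁ d₂ d₃ (x t) 0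
        = x t 0 * (α₁ - α₁ * (x t 0)^2 - (α₁ + α₂ + d₁) * (x t 1)^2 + d₂ * (x t 2)^2) := rfl
    have e1 : bVF α₁ α₂ α₃ d₁ d₂ d₃ (x t) 1
        = x t 1 * (α₂ + d₁ * (x t 0)^2 - α₂ * (x t 1)^2 - (α₂ + α₃ + d₃) * (x t 2)^2) := rfl
    have e2 : bVF α₁ α₂ α₃ d₁ d₂ d₃ (x t) 2
        = x t 2 * (α₃ - (α₃ + α₁ + d₂) * (x t 0)^2 + d₃ * (x t 1)^2 - α₃ * (x t 2)^2) := rfl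
    rw [e0, e1, e2, hWdef, hVdef]
    ring
  have hVcont : ∀ t : ℝ, 0 ≤ t → ContinuousAt V t := fun t ht => (hV' t ht).continuousAt
  -- positivity of V 0
  have hV0 : 0 < V 0 := by
    rw [← hnorm]
    exact pow_pos (norm_pos_iff.2 h0) 2
  set m : ℝ := min α₁ (min α₂ α₃) with hmdef
  have hm : 0 < m := lt_min hα₁ (lt_min hα₂ hα₃)
  have hWV : ∀ t, m * V t ≤ W t := by
    intro t
    have h1 : m ≤ α₁ := min_le_left _ _
    have h2 : m ≤ α₂ := (min_le_right _ _).trans (min_le_left _ _)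
    have h3 : m ≤ α₃ := (min_le_right _ _).trans (min_le_right _ _)
    have s0 : (0:ℝ) ≤ (x t 0)^2 := sq_nonneg _
    have s1 : (0:ℝ) ≤ (x t 1)^2 := sq_nonneg _
    have s2 : (0:ℝ) ≤ (x t 2)^2 := sq_nonneg _
    simp only [hWdef, hVdef]
    nlinarith
  set c : ℝ := min (V 0) 1 / 2 with hcdef
  have hc0 : 0 < c := by
    have := lt_min hV0 one_pos
    simpa [hcdef] using by linarith [lt_min hV0 one_pos]
  have hc1 : c < 1 := by
    have : min (V 0) 1 ≤ 1 := min_le_right _ _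
    simp only [hcdef]; linarith
  have hcV : c ≤ V 0 := by
    have h1 : min (V 0) 1 ≤ V 0 := min_le_left _ _
    have h2 : (0:ℝ) ≤ min (V 0) 1 := le_min hV0.le one_pos.le
    exact (half_le_self h2).trans h1
  -- lower barrier: V t ≥ c for t ≥ 0
  have hlow : ∀ t : ℝ, 0 ≤ t → c ≤ V t := by
    intro t ht
    have key : ∀ ⦃s⦄, s ∈ Set.Icc (0:ℝ) t → -V s ≤ -c := by
      apply image_le_of_deriv_right_lt_deriv_boundary
        (f := fun s => -V s) (f' := fun s => -(2 * W s * (1 - V s)))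
        (B := fun _ => -c) (B' := fun _ => 0)
      · exact fun s hs => ((hVcont s hs.1).continuousWithinAt).neg
      · exact fun s hs => ((hV' s hs.1).hasDerivWithinAt).neg
      · linarith
      · exact fun s => hasDerivAt_const _ _
      · intro s hs heq
        have hVs : V s = c := by linarith [neg_injective heq]
        have hW : m * c ≤ W s := by rw [← hVs]; exact hWV s
        have : 0 < 2 * W s * (1 - V s) := by
          rw [hVs]
          have : 0 < W s := lt_of_lt_of_le (by positivity) hW
          nlinarith
        linarith
    have := key (Set.right_mem_Icc.2 ht)
    linarith
  -- exponential decay of (V - 1)^2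
  set k : ℝ := 4 * m * c with hkdef
  have hk : 0 < k := by positivity
  set G : ℝ → ℝ := fun t => Real.exp (k * t) * (V t - 1)^2 with hGdef
  have hG' : ∀ t : ℝ, 0 ≤ t → HasDerivAt G
      (Real.exp (k * t) * (k * (V t - 1)^2 + 2 * (V t - 1) * (2 * W t * (1 - V t)))) t := by
    intro t ht
    have he : HasDerivAt (fun s => Real.exp (k * s)) (Real.exp (k * t) * k) t := by
      simpa using ((hasDerivAt_id t).const_mul k).exp
    have hg : HasDerivAt (fun s => (V s - 1)^2) (2 * (V t - 1) * (2 * W t * (1 - V t))) t := by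
      have := ((hV' t ht).sub_const 1).pow 2
      refine this.congr_deriv ?_
      ring
    have := he.mul hg
    refine this.congr_deriv ?_
    ring
  have hGanti : AntitoneOn G (Set.Ici 0) := by
    apply antitoneOn_of_deriv_nonpos (convex_Ici 0)
    · exact fun t ht => ((hG' t ht).continuousAt).continuousWithinAt
    · intro t ht
      rw [interior_Ici] at ht
      exact (hG' t (le_of_lt ht)).differentiableAt.differentiableWithinAt
    · intro t ht
      rw [interior_Ici] at ht
      rw [(hG' t (le_of_lt ht)).deriv]
      have hWt : m * c ≤ W t := le_trans (by nlinarith [hlow t (le_of_lt ht)]) (hWV t)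
      have hexp : (0:ℝ) < Real.exp (k * t) := Real.exp_pos _
      have : k * (V t - 1)^2 + 2 * (V t - 1) * (2 * W t * (1 - V t))
          = (k - 4 * W t) * (V t - 1)^2 := by ring
      rw [this]
      have h1 : k - 4 * W t ≤ 0 := by simp only [hkdef]; linarith
      exact mul_nonpos_of_nonneg_of_nonpos hexp.le
        (mul_nonpos_of_nonpos_of_nonneg h1 (sq_nonneg _))
  -- conclude
  have hbound : ∀ t : ℝ, 0 ≤ t → (V t - 1)^2 ≤ (V 0 - 1)^2 * Real.exp (-(k * t)) := by
    intro t ht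
    have := hGanti (Set.self_mem_Ici) (Set.mem_Ici.2 ht) ht
    simp only [hGdef, mul_zero, Real.exp_zero, one_mul] at this
    have hexp : (0:ℝ) < Real.exp (k * t) := Real.exp_pos _
    calc (V t - 1)^2 = Real.exp (k * t) * (V t - 1)^2 / Real.exp (k * t) := by
          field_simp
      _ ≤ (V 0 - 1)^2 / Real.exp (k * t) := by
          exact div_le_div_of_nonneg_right this hexp.le |>.trans_eq rfl
      _ = (V 0 - 1)^2 * Real.exp (-(k * t)) := by
          rw [Real.exp_neg, div_eq_mul_inv]
  have htend : Filter.Tendsto (fun t => (V t - 1)^2) Filter.atTop (nhds 0) := by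
    apply squeeze_zero' (Filter.Eventually.of_forall fun t => sq_nonneg _)
    · filter_upwards [Filter.eventually_ge_atTop (0:ℝ)] with t ht
      exact hbound t ht
    · have h1 : Filter.Tendsto (fun t : ℝ => -(k * t)) Filter.atTop Filter.atBot := by
        apply Filter.tendsto_neg_atBot_iff.mpr
        exact Filter.Tendsto.const_mul_atTop hk Filter.tendsto_id
      have := Real.tendsto_exp_atBot.comp h1
      simpa using this.const_mul ((V 0 - 1)^2)
  have habs : Filter.Tendsto (fun t => |V t - 1|) Filter.atTop (nhds 0) := by
    have := htend.sqrt
    simpa [Real.sqrt_sq_eq_abs] using this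
  have hVt : Filter.Tendsto V Filter.atTop (nhds 1) := by
    rw [tendsto_iff_norm_sub_tendsto_zero]
    simpa [Real.norm_eq_abs] using habs
  exact (Filter.tendsto_congr fun t => hnorm t).mpr hVt
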